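/- Let k ∈ ℕ, let G = (V,E) be a graph with V = A ∪ B, A ∩ B = ∅, and let 𝔟 : A → 𝒫(B) be a function. Let H be the graph with vertex set V and edge set E ∪ {{a,z} : a ∈ A, z ∈ 𝔟(a)}. Suppose deg_G(a) + |𝔟(a)| ≤ k for each a ∈ A. If χ(G) ≤ k+1, then χ(H) ≤ k+1. -/

import Mathlib

open SimpleGraph

/-- Degree of a vertex: the cardinality of its neighbor set. -/
noncomputable def ndeg {V : Type*} (G : SimpleGraph V) (v : V) : ℕ := (G.neighborSet v).ncard

/-- The graph represented by (G, A, B, b): G together with all edges {a, z} for a ∈ A, z ∈ b a. -/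
def repGraph {V : Type*} (G : SimpleGraph V) (A : Set V) (b : V → Set V) : SimpleGraph V :=
  G ⊔ SimpleGraph.fromRel (fun u v => u ∈ A ∧ v ∈ b u)

/-- Greedy extension: if every vertex of `S` has fewer than `n` neighbors and we have an
`n`-coloring proper on all edges avoiding `S`, then `H` is `n`-colorable. -/
theorem greedy_extend {V : Type*} [Fintype V] [DecidableEq V] {n : ℕ} (H : SimpleGraph V)
    (S : Finset V)
    (hdeg : ∀ v ∈ S, (H.neighborSet v).ncard < n) (c : V → Fin n)
    (hc : ∀ u v, H.Adj u v → u ∉ S → v ∉ S → c u ≠ c v) : H.Colorable n := by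
  classical
  induction S using Finset.induction_on generalizing c with
  | empty =>
    exact ⟨SimpleGraph.Coloring.mk c fun h => hc _ _ h (by simp) (by simp)⟩
  | insert _ _ ha IH =>
    rename_i a S
    have hda : (H.neighborSet a).ncard < n := hdeg a (by simp)
    set s : Finset (Fin n) := ((H.neighborSet a).toFinite.toFinset).image c with hs
    have hscard : s.card < n := by
      calc s.card ≤ ((H.neighborSet a).toFinite.toFinset).card := Finset.card_image_le
        _ = (H.neighborSet a).ncard := (Set.ncard_eq_toFinset_card _ _).symm
        _ < n := hda
    have hex : ∃ x : Fin n, x ∉ s := by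
      by_contra h
      push_neg at h
      have : s = Finset.univ := Finset.eq_univ_iff_forall.mpr h
      rw [this] at hscard
      simp at hscard
    obtain ⟨x, hx⟩ := hex
    set c' := Function.update c a x with hc'
    refine IH (fun v hv => hdeg v (by simp [hv])) c' ?_
    intro u v huv hu hv
    have key : ∀ w, w ≠ a → c' w = c w := fun w hw => by
      rw [hc']; exact Function.update_of_ne hw _ _
    have keya : c' a = x := by rw [hc']; exact Function.update_self _ _ _
    by_cases hua : u = a
    · have hva : v ≠ a := fun h => huv.ne (hua.trans h.symm)
      have hv' : c v ∈ s := by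
        rw [hs]
        refine Finset.mem_image_of_mem c ?_
        rw [Set.Finite.mem_toFinset, SimpleGraph.mem_neighborSet]
        exact hua ▸ huv
      rw [hua, keya, key v hva]
      exact fun h => hx (h ▸ hv')
    · by_cases hva : v = a
      · have hu' : c u ∈ s := by
          rw [hs]
          refine Finset.mem_image_of_mem c ?_
          rw [Set.Finite.mem_toFinset, SimpleGraph.mem_neighborSet]
          exact hva ▸ huv.symm
        rw [key u hua, hva, keya]
        exact fun h => hx (h ▸ hu')
      · rw [key u hua, key v hva]
        exact hc u v huv (by simp [hu, hua]) (by simp [hv, hva])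

/-- Greedy bound: if H is represented by (G, A, B, b) with deg_G(a) + |b(a)| ≤ k for all
a ∈ A, and χ(G) ≤ k+1, then χ(H) ≤ k+1. -/
theorem stmt_5 {V : Type*} [Fintype V] (G : SimpleGraph V) (A B : Set V)
    (hU : A ∪ B = Set.univ) (hdisj : Disjoint A B) (b : V → Set V)
    (hb : ∀ a ∈ A, b a ⊆ B) (k : ℕ)
    (hdeg : ∀ a ∈ A, ndeg G a + (b a).ncard ≤ k)
    (hG : G.Colorable (k + 1)) :
    (repGraph G A b).Colorable (k + 1) := by
  classical
  obtain ⟨c⟩ := hG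
  set H := repGraph G A b with hH
  have hadj : ∀ u v, H.Adj u v ↔ G.Adj u v ∨
      (u ≠ v ∧ ((u ∈ A ∧ v ∈ b u) ∨ (v ∈ A ∧ u ∈ b v))) := by
    intro u v
    simp [hH, repGraph, SimpleGraph.fromRel_adj]
  refine greedy_extend H (Set.toFinite A).toFinset ?_ c ?_
  · intro a haS
    have haA : a ∈ A := by simpa using haS
    have hsub : H.neighborSet a ⊆ G.neighborSet a ∪ b a := by
      intro v hv
      rw [SimpleGraph.mem_neighborSet, hadj] at hv
      rcases hv with h | ⟨hne, h | h⟩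
      · exact Or.inl h
      · exact Or.inr h.2
      · exact absurd haA (Set.disjoint_right.mp hdisj (hb v h.1 h.2))
    calc (H.neighborSet a).ncard ≤ (G.neighborSet a ∪ b a).ncard :=
          Set.ncard_le_ncard hsub (Set.toFinite _)
      _ ≤ (G.neighborSet a).ncard + (b a).ncard := Set.ncard_union_le _ _
      _ ≤ k := hdeg a haA
      _ < k + 1 := Nat.lt_succ_self k
  · intro u v huv hu hv
    rw [hadj] at huv
    rcases huv with h | ⟨hne, h | h⟩
    · exact c.valid h
    · exact absurd h.1 (by simpa using hu)
    · exact absurd h.1 (by simpa using hv)
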